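/- Let H be a reproducing kernel Hilbert space on X with all k_a nonzero and {k_a, k_b} linearly independent for a ≠ b. Define Γ(a,b) = arccos(|⟨k_a, k_b⟩|/(‖k_a‖·‖k_b‖)). Then for the orthogonal projections P_a, P_b onto Z_a = {f : f(a)=0} and Z_b = {f : f(b)=0}, one has ‖P_a - P_b‖ = sin(Γ(a,b)) = sqrt(1 - |⟨k_a,k_b⟩|²/(‖k_a‖²‖k_b‖²)). -/

import Mathlib

open scoped ComplexConjugate

lemma conj_mul_self' (z : ℂ) : (starRingEnd ℂ) z * z = ((‖z‖ ^ 2 : ℝ) : ℂ) := by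
  rw [mul_comm, Complex.mul_conj, Complex.normSq_eq_norm_sq]

lemma aux_norm_combo {H : Type*} [NormedAddCommGroup H] [InnerProductSpace ℂ H]
    {u w : H} (huu : (inner ℂ u u : ℂ) = 1) (hww : (inner ℂ w w : ℂ) = 1)
    (huw : (inner ℂ u w : ℂ) = 0) (p q : ℂ) :
    ‖p • u + q • w‖ ^ 2 = ‖p‖ ^ 2 + ‖q‖ ^ 2 := by
  have hwu : (inner ℂ w u : ℂ) = 0 := by rw [← inner_conj_symm, huw]; simp
  have h : (inner ℂ (p • u + q • w) (p • u + q • w) : ℂ)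
      = conj p * p + conj q * q := by
    simp only [inner_add_left, inner_add_right, inner_smul_left, inner_smul_right,
      huu, hww, huw, hwu]
    ring
  rw [@norm_sq_eq_re_inner ℂ, h, conj_mul_self', conj_mul_self']
  norm_cast

lemma aux_opnorm {H : Type*} [NormedAddCommGroup H] [InnerProductSpace ℂ H]
    (T : H →L[ℂ] H) (u v : H) (hu : ‖u‖ = 1) (hv : ‖v‖ = 1)
    (hT : ∀ x : H, T x = (inner ℂ v x : ℂ) • v - (inner ℂ u x : ℂ) • u)
    (hne : v - (inner ℂ u v : ℂ) • u ≠ 0) :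
    ‖T‖ = Real.sqrt (1 - ‖(inner ℂ u v : ℂ)‖ ^ 2) := by
  set c : ℂ := inner ℂ u v with hc
  have huu : (inner ℂ u u : ℂ) = 1 := by
    rw [inner_self_eq_norm_sq_to_K, hu]; norm_num
  have hvv : (inner ℂ v v : ℂ) = 1 := by
    rw [inner_self_eq_norm_sq_to_K, hv]; norm_num
  have hvu : (inner ℂ v u : ℂ) = conj c := by rw [hc, ← inner_conj_symm]
  set s : ℝ := ‖v - c • u‖ with hs
  have hs0 : 0 < s := norm_pos_iff.mpr hne
  have hsC : (s : ℂ) ≠ 0 := by exact_mod_cast hs0.ne'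
  have hinner_sub : (inner ℂ (v - c • u) (v - c • u) : ℂ) = 1 - conj c * c := by
    simp only [inner_sub_left, inner_sub_right, inner_smul_left, inner_smul_right,
      huu, hvv, hvu, ← hc]
    ring
  have hs2 : (s : ℝ) ^ 2 = 1 - ‖c‖ ^ 2 := by
    rw [hs, @norm_sq_eq_re_inner ℂ, hinner_sub, conj_mul_self']
    norm_cast
  have hcc : (conj c) * c = 1 - (s : ℂ) ^ 2 := by
    rw [conj_mul_self']
    have hr : (‖c‖ : ℝ) ^ 2 = 1 - s ^ 2 := by linarith
    exact_mod_cast congrArg Complex.ofReal hr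
  set w : H := ((s : ℂ))⁻¹ • (v - c • u) with hw
  have hsw : (s : ℂ) • w = v - c • u := by
    rw [hw, smul_smul, mul_inv_cancel₀ hsC, one_smul]
  have hvdec : v = c • u + (s : ℂ) • w := by rw [hsw]; abel
  have huw : (inner ℂ u w : ℂ) = 0 := by
    rw [hw, inner_smul_right, inner_sub_right, inner_smul_right, huu, ← hc]
    ring
  have hwu : (inner ℂ w u : ℂ) = 0 := by rw [← inner_conj_symm, huw]; simp
  have hww : (inner ℂ w w : ℂ) = 1 := by
    rw [hw, inner_smul_left, inner_smul_right, hinner_sub]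
    have : conj ((s : ℂ))⁻¹ = ((s : ℂ))⁻¹ := by simp
    rw [this, show (1 : ℂ) - conj c * c = (s : ℂ) ^ 2 from by rw [hcc]; ring]
    field_simp
  -- key identity
  have key : ∀ x : H, ‖T x‖ ^ 2 = s ^ 2 * (‖(inner ℂ u x : ℂ)‖ ^ 2 + ‖(inner ℂ w x : ℂ)‖ ^ 2) := by
    intro x
    set α : ℂ := inner ℂ u x with hα
    set γ : ℂ := inner ℂ w x with hγ
    have hvx : (inner ℂ v x : ℂ) = conj c * α + (s : ℂ) * γ := by
      rw [hvdec, inner_add_left, inner_smul_left, inner_smul_left, ← hα, ← hγ]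
      simp
    have hTx : T x = ((conj c * α + (s : ℂ) * γ) * c - α) • u
        + ((conj c * α + (s : ℂ) * γ) * (s : ℂ)) • w := by
      rw [hT, hvx, hvdec, ← hα]
      module
    rw [hTx, aux_norm_combo huu hww huw]
    have hid : conj ((conj c * α + (s : ℂ) * γ) * c - α) * ((conj c * α + (s : ℂ) * γ) * c - α)
        + conj ((conj c * α + (s : ℂ) * γ) * (s : ℂ)) * ((conj c * α + (s : ℂ) * γ) * (s : ℂ))
        = (s : ℂ) ^ 2 * (conj α * α + conj γ * γ) := by
      have hconjs : conj ((s : ℂ)) = (s : ℂ) := by simp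
      simp only [map_mul, map_add, map_sub, RingHomCompTriple.comp_apply, RingHom.id_apply,
        Complex.conj_conj, hconjs]
      linear_combination (conj α * α * (conj c * c - 1)
        + (s : ℂ) * (α * conj c * conj γ + conj α * c * γ)
        + (s : ℂ) ^ 2 * (γ * conj γ)) * hcc
    rw [conj_mul_self', conj_mul_self', conj_mul_self', conj_mul_self'] at hid
    exact_mod_cast hid
  -- orthonormal family for Bessel
  have hwn : ‖w‖ = 1 := by
    have h := hww; rw [inner_self_eq_norm_sq_to_K] at h
    have h2 : ‖w‖ ^ 2 = 1 := by rw [@norm_sq_eq_re_inner ℂ, hww]; simp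
    nlinarith [norm_nonneg w]
  have horth : Orthonormal ℂ ![u, w] := by
    rw [orthonormal_iff_ite]
    intro i j
    fin_cases i <;> fin_cases j <;> simp [huu, hww, huw, hwu, hu, hwn]
  have upper : ‖T‖ ≤ s := by
    refine T.opNorm_le_bound hs0.le (fun x => ?_)
    have hb := horth.sum_inner_products_le x (s := Finset.univ)
    rw [Fin.sum_univ_two] at hb
    simp only [Matrix.cons_val_zero, Matrix.cons_val_one, Matrix.head_cons] at hb
    have h2 : ‖T x‖ ^ 2 ≤ (s * ‖x‖) ^ 2 := by
      rw [key x, mul_pow]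
      exact mul_le_mul_of_nonneg_left hb (by positivity)
    have := Real.sqrt_le_sqrt h2
    rwa [Real.sqrt_sq (norm_nonneg _), Real.sqrt_sq (by positivity)] at this
  have lower : s ≤ ‖T‖ := by
    have hTu : ‖T u‖ = s := by
      have h2 : ‖T u‖ ^ 2 = s ^ 2 := by
        rw [key u, huu, hwu]; norm_num
      have := congrArg Real.sqrt h2
      rwa [Real.sqrt_sq (norm_nonneg _), Real.sqrt_sq hs0.le] at this
    calc s = ‖T u‖ := hTu.symm
      _ ≤ ‖T‖ := T.unit_le_opNorm u (le_of_eq hu)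
  rw [le_antisymm upper lower, ← hs2, Real.sqrt_sq hs0.le]

/-- In a reproducing kernel Hilbert space, for `a ≠ b` with `k_a, k_b` nonzero and linearly
independent, the orthogonal projections `P_a`, `P_b` onto `Z_a = {f : f(a)=0}` and
`Z_b = {f : f(b)=0}` satisfy
`‖P_a - P_b‖ = sin (arccos (|⟨k_a,k_b⟩|/(‖k_a‖‖k_b‖))) = sqrt (1 - |⟨k_a,k_b⟩|²/(‖k_a‖²‖k_b‖²))`. -/
theorem rkhs_projection_difference_norm
    {H : Type*} [NormedAddCommGroup H] [InnerProductSpace ℂ H] [CompleteSpace H]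
    {X : Type*} (ev : H →ₗ[ℂ] (X → ℂ)) (kk : X → H)
    (hrep : ∀ (f : H) (w : X), ev f w = inner ℂ (kk w) f)
    (a b : X) (hab : a ≠ b)
    (hka : kk a ≠ 0) (hkb : kk b ≠ 0)
    (hli : LinearIndependent ℂ ![kk a, kk b])
    (Za Zb : Submodule ℂ H)
    (hZa : ∀ f : H, f ∈ Za ↔ ev f a = 0) (hZb : ∀ f : H, f ∈ Zb ↔ ev f b = 0)
    [Submodule.HasOrthogonalProjection Za] [Submodule.HasOrthogonalProjection Zb] :
    ‖Za.subtypeL.comp (Submodule.orthogonalProjectionOnto Za) - Zb.subtypeL.comp (Submodule.orthogonalProjectionOnto Zb)‖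
        = Real.sin (Real.arccos (‖(inner ℂ (kk a) (kk b) : ℂ)‖ / (‖kk a‖ * ‖kk b‖))) ∧
      Real.sin (Real.arccos (‖(inner ℂ (kk a) (kk b) : ℂ)‖ / (‖kk a‖ * ‖kk b‖)))
        = Real.sqrt (1 - ‖(inner ℂ (kk a) (kk b) : ℂ)‖^2 / (‖kk a‖^2 * ‖kk b‖^2)) := by
  have hna : (0:ℝ) < ‖kk a‖ := norm_pos_iff.mpr hka
  have hnb : (0:ℝ) < ‖kk b‖ := norm_pos_iff.mpr hkb
  have hnaC : ((‖kk a‖ : ℂ)) ≠ 0 := by exact_mod_cast hna.ne'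
  have hnbC : ((‖kk b‖ : ℂ)) ≠ 0 := by exact_mod_cast hnb.ne'
  set u : H := ((‖kk a‖ : ℂ))⁻¹ • kk a with hu_def
  set v : H := ((‖kk b‖ : ℂ))⁻¹ • kk b with hv_def
  have hu : ‖u‖ = 1 := by
    rw [hu_def, norm_smul, norm_inv, Complex.norm_real, Real.norm_eq_abs,
      abs_of_pos hna, inv_mul_cancel₀ hna.ne']
  have hv : ‖v‖ = 1 := by
    rw [hv_def, norm_smul, norm_inv, Complex.norm_real, Real.norm_eq_abs,
      abs_of_pos hnb, inv_mul_cancel₀ hnb.ne']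
  -- the inner products
  have hcval : (inner ℂ u v : ℂ)
      = ((‖kk a‖ : ℂ))⁻¹ * ((‖kk b‖ : ℂ))⁻¹ * (inner ℂ (kk a) (kk b) : ℂ) := by
    rw [hu_def, hv_def, inner_smul_left, inner_smul_right]
    simp [mul_comm, mul_assoc, mul_left_comm]
  have hcnorm : ‖(inner ℂ u v : ℂ)‖ = ‖(inner ℂ (kk a) (kk b) : ℂ)‖ / (‖kk a‖ * ‖kk b‖) := by
    rw [hcval]
    rw [norm_mul, norm_mul, norm_inv, norm_inv, Complex.norm_real, Complex.norm_real,
      Real.norm_eq_abs, Real.norm_eq_abs, abs_of_pos hna, abs_of_pos hnb]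
    field_simp
  -- projections formulas
  have hproj : ∀ (Z : Submodule ℂ H) [Submodule.HasOrthogonalProjection Z], ∀ (p : X),
      kk p ≠ 0 → (∀ f : H, f ∈ Z ↔ ev f p = 0) → ∀ x : H,
      (Submodule.orthogonalProjectionOnto Z x : H)
        = x - ((inner ℂ (((‖kk p‖ : ℂ))⁻¹ • kk p) x : ℂ)) • (((‖kk p‖ : ℂ))⁻¹ • kk p) := by
    intro Z _ p hkp hZ x
    have hnp : (0:ℝ) < ‖kk p‖ := norm_pos_iff.mpr hkp
    have hnpC : ((‖kk p‖ : ℂ)) ≠ 0 := by exact_mod_cast hnp.ne'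
    set up : H := ((‖kk p‖ : ℂ))⁻¹ • kk p with hup
    have hmemZ : ∀ f : H, f ∈ Z ↔ (inner ℂ (kk p) f : ℂ) = 0 := by
      intro f; rw [hZ f, hrep f p]
    rw [← Submodule.starProjection_apply]
    apply Submodule.eq_starProjection_of_mem_of_inner_eq_zero
    · rw [hmemZ]
      rw [inner_sub_right, inner_smul_right, hup, inner_smul_left, inner_smul_right,
        inner_self_eq_norm_sq_to_K]
      have : ((starRingEnd ℂ)) ((‖kk p‖ : ℂ))⁻¹ = ((‖kk p‖ : ℂ))⁻¹ := by
        simp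
      rw [this]
      field_simp
      rw [mul_zero]; exact mul_eq_zero_of_right _ (sub_eq_zero.mpr rfl)
    · intro z hz
      have hz0 : (inner ℂ (kk p) z : ℂ) = 0 := (hmemZ z).mp hz
      have : x - (x - (inner ℂ up x : ℂ) • up) = (inner ℂ up x : ℂ) • up := by abel
      rw [this]
      simp [hup, inner_smul_left, inner_smul_right, hz0]
  -- the operator
  set T : H →L[ℂ] H :=
    Za.subtypeL.comp (Submodule.orthogonalProjectionOnto Za) - Zb.subtypeL.comp (Submodule.orthogonalProjectionOnto Zb)
    with hT_def
  have hT : ∀ x : H, T x = (inner ℂ v x : ℂ) • v - (inner ℂ u x : ℂ) • u := by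
    intro x
    have h1 := hproj Za a hka hZa x
    have h2 := hproj Zb b hkb hZb x
    rw [hT_def]
    simp only [ContinuousLinearMap.sub_apply, ContinuousLinearMap.comp_apply,
      Submodule.subtypeL_apply]
    rw [h1, h2, ← hu_def, ← hv_def]
    abel
  -- linear independence gives hne
  have hne : v - (inner ℂ u v : ℂ) • u ≠ 0 := by
    intro h0
    set c : ℂ := inner ℂ u v with hc
    have h1 : (-(c * ((‖kk a‖ : ℂ))⁻¹)) • kk a + ((‖kk b‖ : ℂ))⁻¹ • kk b = 0 := by
      rw [show (-(c * ((‖kk a‖ : ℂ))⁻¹)) • kk a + ((‖kk b‖ : ℂ))⁻¹ • kk b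
          = ((‖kk b‖ : ℂ))⁻¹ • kk b - c • (((‖kk a‖ : ℂ))⁻¹ • kk a) from by module]
      rw [← hu_def, ← hv_def]
      exact h0
    have := (LinearIndependent.pair_iff.mp hli _ _ h1).2
    exact hnbC (inv_eq_zero.mp this)
  have hnorm : ‖T‖ = Real.sqrt (1 - ‖(inner ℂ u v : ℂ)‖ ^ 2) :=
    aux_opnorm T u v hu hv hT hne
  constructor
  · rw [← hT_def] at *
    rw [Real.sin_arccos, ← hcnorm, hnorm]
  · rw [Real.sin_arccos, div_pow, mul_pow]
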